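/- arXiv:1401.2026 — 2 statements merged into one kernel-verified Lean document; each statement's English description precedes it below -/
import Mathlib

section
/- Let n ≥ 1, let H be an n×n Hermitian complex matrix, let A₁, …, A_N be n×n complex matrices, let t₁, …, t_N and β be real numbers, and let 1 ≤ k ≤ N. Writing α_z(A) = exp(izH) A exp(−izH) for complex z, one has tr( α_{t₁}(A₁) ⋯ α_{t_{k−1}}(A_{k−1}) · α_{t_k+iβ}(A_k) ⋯ α_{t_N+iβ}(A_N) · exp(−βH) ) = tr( α_{t_k}(A_k) ⋯ α_{t_N}(A_N) · α_{t₁}(A₁) ⋯ α_{t_{k−1}}(A_{k−1}) · exp(−βH) ). (This is the full n-point KMS boundary condition for the finite-dimensional Gibbs state.) -/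
open Matrix Complex

/-- The complexified time evolution `α_z(A) = exp(izH) A exp(−izH)` for `z ∈ ℂ`. -/
noncomputable def gibbsEvolve {n : ℕ} (H : Matrix (Fin n) (Fin n) ℂ) (z : ℂ)
    (A : Matrix (Fin n) (Fin n) ℂ) : Matrix (Fin n) (Fin n) ℂ :=
  NormedSpace.exp ((Complex.I * z) • H) * A * NormedSpace.exp ((-(Complex.I * z)) • H)

lemma exp_smul_mul {n : ℕ} (H : Matrix (Fin n) (Fin n) ℂ) (a b : ℂ) :
    NormedSpace.exp (a • H) * NormedSpace.exp (b • H)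
      = NormedSpace.exp ((a + b) • H) := by
  rw [add_smul, Matrix.exp_add_of_commute]
  exact ((Commute.refl H).smul_left a).smul_right b

lemma exp_smul_zero {n : ℕ} (H : Matrix (Fin n) (Fin n) ℂ) :
    NormedSpace.exp ((0 : ℂ) • H) = 1 := by
  rw [zero_smul, NormedSpace.exp_zero]

lemma gibbsEvolve_shift {n : ℕ} (H : Matrix (Fin n) (Fin n) ℂ) (s : ℂ) (β : ℝ)
    (A : Matrix (Fin n) (Fin n) ℂ) :
    gibbsEvolve H (s + Complex.I * (β : ℂ)) A
      = NormedSpace.exp ((-(β : ℂ)) • H) * gibbsEvolve H s A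
          * NormedSpace.exp ((β : ℂ) • H) := by
  unfold gibbsEvolve
  have h1 : (Complex.I * (s + Complex.I * (β : ℂ))) = -(β : ℂ) + Complex.I * s := by
    have := Complex.I_sq; ring_nf; rw [Complex.I_sq]; ring
  rw [h1]
  have h2 : (-(-(β : ℂ) + Complex.I * s)) = -(Complex.I * s) + (β : ℂ) := by ring
  rw [h2, ← exp_smul_mul, ← exp_smul_mul]
  noncomm_ring

lemma prod_shift {n : ℕ} (H : Matrix (Fin n) (Fin n) ℂ) (β : ℝ) (m : ℕ)
    (f : ℕ → Matrix (Fin n) (Fin n) ℂ) :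
    ((List.range m).map fun j =>
        NormedSpace.exp ((-(β : ℂ)) • H) * f j * NormedSpace.exp ((β : ℂ) • H)).prod
      = NormedSpace.exp ((-(β : ℂ)) • H) * ((List.range m).map f).prod
          * NormedSpace.exp ((β : ℂ) • H) := by
  induction m with
  | zero =>
    simp only [List.range_zero, List.map_nil, List.prod_nil, mul_one, exp_smul_mul]
    simp [exp_smul_zero]
  | succ m ih =>
    rw [List.range_succ, List.map_append, List.map_append, List.prod_append,
      List.prod_append, ih]
    simp only [List.map_cons, List.map_nil, List.prod_cons, List.prod_nil]
    have : NormedSpace.exp ((β : ℂ) • H) * NormedSpace.exp ((-(β : ℂ)) • H) = 1 := by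
      rw [exp_smul_mul]; simp [exp_smul_zero]
    rw [mul_one, mul_one]
    calc NormedSpace.exp ((-(β:ℂ)) • H) * ((List.range m).map f).prod *
          NormedSpace.exp ((β:ℂ) • H) *
          (NormedSpace.exp ((-(β:ℂ)) • H) * f m * NormedSpace.exp ((β:ℂ) • H))
        = NormedSpace.exp ((-(β:ℂ)) • H) * ((List.range m).map f).prod *
          (NormedSpace.exp ((β:ℂ) • H) * NormedSpace.exp ((-(β:ℂ)) • H)) *
          (f m * NormedSpace.exp ((β:ℂ) • H)) := by simp only [mul_assoc]
      _ = _ := by rw [this]; simp only [mul_assoc, mul_one]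

/-- The full `n`-point KMS boundary condition for the finite-dimensional Gibbs state:
for an `n × n` Hermitian matrix `H`, matrices `A₁, …, A_N`, real times `t₁, …, t_N`, a
real inverse temperature `β`, and `1 ≤ k ≤ N`,
`tr(α_{t₁}(A₁) ⋯ α_{t_{k−1}}(A_{k−1}) · α_{t_k+iβ}(A_k) ⋯ α_{t_N+iβ}(A_N) · e^{−βH})
= tr(α_{t_k}(A_k) ⋯ α_{t_N}(A_N) · α_{t₁}(A₁) ⋯ α_{t_{k−1}}(A_{k−1}) · e^{−βH})`. -/
theorem gibbs_kms_npoint_boundary_condition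
    (n : ℕ) (hn : 1 ≤ n)
    (H : Matrix (Fin n) (Fin n) ℂ) (hH : H.IsHermitian)
    (N : ℕ) (A : ℕ → Matrix (Fin n) (Fin n) ℂ) (t : ℕ → ℝ) (β : ℝ)
    (k : ℕ) (hk1 : 1 ≤ k) (hkN : k ≤ N) :
    Matrix.trace
      ((((List.range (k - 1)).map fun i => gibbsEvolve H (t (i + 1)) (A (i + 1))).prod *
        (((List.range (N + 1 - k)).map fun j =>
            gibbsEvolve H ((t (j + k) : ℂ) + Complex.I * (β : ℂ)) (A (j + k))).prod) *
        NormedSpace.exp ((-(β : ℂ)) • H))) =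
    Matrix.trace
      ((((List.range (N + 1 - k)).map fun j =>
            gibbsEvolve H (t (j + k)) (A (j + k))).prod) *
        (((List.range (k - 1)).map fun i => gibbsEvolve H (t (i + 1)) (A (i + 1))).prod) *
        NormedSpace.exp ((-(β : ℂ)) • H)) := by
  set P := ((List.range (k - 1)).map fun i => gibbsEvolve H (t (i + 1)) (A (i + 1))).prod
  set Q := ((List.range (N + 1 - k)).map fun j => gibbsEvolve H (t (j + k)) (A (j + k))).prod
  have hshift : ((List.range (N + 1 - k)).map fun j =>
      gibbsEvolve H ((t (j + k) : ℂ) + Complex.I * (β : ℂ)) (A (j + k))).prod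
      = NormedSpace.exp ((-(β : ℂ)) • H) * Q * NormedSpace.exp ((β : ℂ) • H) := by
    rw [show (fun j => gibbsEvolve H ((t (j + k) : ℂ) + Complex.I * (β : ℂ)) (A (j + k)))
        = fun j => NormedSpace.exp ((-(β : ℂ)) • H) *
            gibbsEvolve H (t (j + k)) (A (j + k)) * NormedSpace.exp ((β : ℂ) • H) from
      funext fun j => gibbsEvolve_shift H _ β _]
    exact prod_shift H β _ _
  rw [hshift]
  have hinv : NormedSpace.exp ((β : ℂ) • H) * NormedSpace.exp ((-(β : ℂ)) • H) = 1 := by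
    rw [exp_smul_mul]; simp [exp_smul_zero]
  have : P * (NormedSpace.exp ((-(β : ℂ)) • H) * Q * NormedSpace.exp ((β : ℂ) • H)) *
      NormedSpace.exp ((-(β : ℂ)) • H)
      = (P * NormedSpace.exp ((-(β : ℂ)) • H)) * Q := by
    calc P * (NormedSpace.exp ((-(β:ℂ)) • H) * Q * NormedSpace.exp ((β:ℂ) • H)) *
          NormedSpace.exp ((-(β:ℂ)) • H)
        = (P * NormedSpace.exp ((-(β:ℂ)) • H)) * Q *
          (NormedSpace.exp ((β:ℂ) • H) * NormedSpace.exp ((-(β:ℂ)) • H)) := by noncomm_ring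
      _ = _ := by rw [hinv, mul_one]
  rw [this, Matrix.trace_mul_comm, mul_assoc]
end

section
/- Let a > 0, let ξ₁, ξ₂, ρ be real numbers, and let z ∈ ℂ with 0 < Im z < 2π/a. Then a⁻² ( e^{2aξ₁} + e^{2aξ₂} − 2 e^{a(ξ₁+ξ₂)} cosh(a z) ) + ρ² ≠ 0, where cosh is the complex hyperbolic cosine. (This is the nonvanishing of the complexified squared Minkowski interval between two Rindler-wedge points, analytically continued in the boost parameter z into the open strip of width 2π/a; it is the analytic core of the statement that the Minkowski vacuum restricted to the Rindler wedge satisfies the KMS condition at inverse temperature β = 2π/a.) -/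
open Complex

lemma my_cosh_re (w : ℂ) : (Complex.cosh w).re = Real.cosh w.re * Real.cos w.im := by
  rw [Complex.cosh, Real.cosh_eq]
  simp [Complex.exp_re, Complex.div_re, Complex.normSq, Real.cos_neg]
  ring

lemma my_cosh_im (w : ℂ) : (Complex.cosh w).im = Real.sinh w.re * Real.sin w.im := by
  rw [Complex.cosh, Real.sinh_eq]
  simp [Complex.exp_im, Complex.div_im, Complex.normSq, Real.sin_neg]
  ring

lemma my_aux (b u v x θ ρ : ℝ) (hb : 0 < b) (hu : 0 < u) (hv : 0 < v)
    (hθ0 : 0 < θ) (hθ2 : θ < 2 * Real.pi)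
    (hre : b * (u * u + v * v - 2 * (u * v) * (Real.cosh x * Real.cos θ)) + ρ * ρ = 0)
    (him : Real.sinh x * Real.sin θ = 0) : False := by
  have hπ := Real.pi_pos
  rcases mul_eq_zero.mp him with hsx | hsθ
  · have hx0 : x = 0 := Real.sinh_injective (by rw [Real.sinh_zero]; exact hsx)
    rw [hx0, Real.cosh_zero] at hre
    have hcos : Real.cos θ < 1 := by
      rcases lt_or_eq_of_le (Real.cos_le_one θ) with h | h
      · exact h
      · exfalso
        obtain ⟨n, hn⟩ := (Real.cos_eq_one_iff θ).mp h
        have h1 : 0 < n := by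
          by_contra hc
          push_neg at hc
          have : (n:ℝ) ≤ 0 := by exact_mod_cast hc
          nlinarith
        have h2 : (1:ℝ) ≤ (n:ℝ) := by exact_mod_cast h1
        nlinarith
    have h3 : 0 < u * u + v * v - 2 * (u * v) * (1 * Real.cos θ) := by
      nlinarith [sq_nonneg (u - v), mul_pos hu hv]
    linarith [mul_pos hb h3, sq_nonneg ρ]
  · have hθπ : θ = Real.pi := by
      obtain ⟨n, hn⟩ := Real.sin_eq_zero_iff.mp hsθ
      have h1 : 0 < n := by
        by_contra hc
        push_neg at hc
        have : (n:ℝ) ≤ 0 := by exact_mod_cast hc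
        nlinarith
      have h2 : n < 2 := by
        by_contra hc
        push_neg at hc
        have : (2:ℝ) ≤ (n:ℝ) := by exact_mod_cast hc
        nlinarith
      have hn1 : n = 1 := by omega
      rw [hn1] at hn
      simpa using hn.symm
    rw [hθπ, Real.cos_pi] at hre
    have h3 : 0 < u * u + v * v - 2 * (u * v) * (Real.cosh x * -1) := by
      nlinarith [Real.one_le_cosh x, mul_pos hu hv]
    linarith [mul_pos hb h3, sq_nonneg ρ]

/-- Nonvanishing of the complexified squared Minkowski interval between two points of
the right Rindler wedge, analytically continued in the boost parameter `z` into the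
open strip `0 < Im z < 2π/a`: for `a > 0`, real `ξ₁, ξ₂, ρ`, and such `z`,
`a⁻²(e^{2aξ₁} + e^{2aξ₂} − 2 e^{a(ξ₁+ξ₂)} cosh(az)) + ρ² ≠ 0`.
This is the analytic core of the statement that the Minkowski vacuum restricted to the
Rindler wedge satisfies the KMS condition at inverse temperature `β = 2π/a`. -/
theorem rindler_complexified_interval_ne_zero
    (a : ℝ) (ha : 0 < a) (ξ₁ ξ₂ ρ : ℝ) (z : ℂ)
    (him0 : 0 < z.im) (him1 : z.im < 2 * Real.pi / a) :
    ((a : ℂ)⁻¹) ^ 2 *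
        ((Real.exp (2 * a * ξ₁) : ℂ) + (Real.exp (2 * a * ξ₂) : ℂ) -
          2 * (Real.exp (a * (ξ₁ + ξ₂)) : ℂ) * Complex.cosh ((a : ℂ) * z)) +
      (ρ : ℂ) ^ 2 ≠ 0 := by
  have hπ := Real.pi_pos
  have hu : (0:ℝ) < Real.exp (a * ξ₁) := Real.exp_pos _
  have hv : (0:ℝ) < Real.exp (a * ξ₂) := Real.exp_pos _
  have he1 : Real.exp (2 * a * ξ₁) = Real.exp (a * ξ₁) * Real.exp (a * ξ₁) := by
    rw [← Real.exp_add]; ring_nf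
  have he2 : Real.exp (2 * a * ξ₂) = Real.exp (a * ξ₂) * Real.exp (a * ξ₂) := by
    rw [← Real.exp_add]; ring_nf
  have he3 : Real.exp (a * (ξ₁ + ξ₂)) = Real.exp (a * ξ₁) * Real.exp (a * ξ₂) := by
    rw [← Real.exp_add]; ring_nf
  have hb : (0:ℝ) < (a⁻¹)^2 := by positivity
  have hθ0 : 0 < a * z.im := by positivity
  have hθ2 : a * z.im < 2 * Real.pi := by
    rw [lt_div_iff₀ ha] at him1
    nlinarith
  rw [he1, he2, he3,
    show ((a:ℂ)⁻¹)^2 = (((a⁻¹)^2 : ℝ) : ℂ) by push_cast; ring]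
  intro h
  rw [Complex.ext_iff] at h
  obtain ⟨hre, him⟩ := h
  simp only [Complex.add_re, Complex.add_im, Complex.mul_re, Complex.mul_im,
    Complex.sub_re, Complex.sub_im, Complex.ofReal_re, Complex.ofReal_im,
    Complex.re_ofNat, Complex.im_ofNat, mul_zero, zero_mul, sub_zero, add_zero, zero_add,
    my_cosh_re, my_cosh_im, Complex.zero_re, Complex.zero_im, pow_two] at hre him
  refine my_aux ((a⁻¹)^2) (Real.exp (a * ξ₁)) (Real.exp (a * ξ₂)) (a * z.re)
    (a * z.im) ρ hb hu hv hθ0 hθ2 (by linear_combination hre) ?_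
  have h2 : (a⁻¹)^2 * (2 * (Real.exp (a * ξ₁) * Real.exp (a * ξ₂)) *
      (Real.sinh (a * z.re) * Real.sin (a * z.im))) = 0 := by
    linear_combination -him
  rcases mul_eq_zero.mp h2 with h | h
  · exact absurd h (by positivity)
  · rcases mul_eq_zero.mp h with h | h
    · exact absurd h (by positivity)
    · exact h
end
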